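/- If the score function decomposes as a sum of local scores, score(G) = Σ_{v∈V} c(v, Pa_G(v)), then maximizing score over all DAGs on V equals the optimum of the ILP: maximize Σ_{v,W} c(v,W)·I(W→v) over binary variables I(W→v) subject to Σ_W I(W→v) = 1 for all v and the cluster constraints Σ_{v∈C} Σ_{W∩C=∅} I(W→v) ≥ 1 for all nonempty C ⊆ V. -/
import Mathlib


open Finset

lemma my_exists_min {V : Type*} [Finite V] (Pa : V → Finset V)
    (h : ∀ v, ¬ Relation.TransGen (fun u w => u ∈ Pa w) v v)
    (C : Finset V) (hC : C.Nonempty) :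
    ∃ v ∈ C, ∀ u ∈ C, u ∉ Pa v := by
  have hirr : IsIrrefl V (Relation.TransGen (fun u w => u ∈ Pa w)) := ⟨h⟩
  have htr : IsTrans V (Relation.TransGen (fun u w => u ∈ Pa w)) :=
    ⟨fun _ _ _ h1 h2 => h1.trans h2⟩
  have hwf : WellFounded (Relation.TransGen (fun u w => u ∈ Pa w)) :=
    Finite.wellFounded_of_trans_of_irrefl _
  have hwf' : WellFounded (fun u w => u ∈ Pa w) :=
    Subrelation.wf (fun hh => Relation.TransGen.single hh) hwf
  obtain ⟨v, hvC, hmin⟩ := hwf'.has_min (↑C) (Finset.coe_nonempty.mpr hC)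
  exact ⟨v, hvC, fun u hu hup => hmin u hu hup⟩

lemma my_unique_one {V : Type*} [Fintype V] [DecidableEq V] (f : Finset V → ℝ)
    (hbin : ∀ W, f W = 0 ∨ f W = 1) (hsum : ∑ W : Finset V, f W = 1) :
    ∃ P, f P = 1 ∧ ∀ W, f W = 1 → W = P := by
  have hnn : ∀ W : Finset V, 0 ≤ f W := fun W => by rcases hbin W with h | h <;> simp [h]
  have hex : ∃ P, f P = 1 := by
    by_contra hno
    push_neg at hno
    have hz : ∀ W : Finset V, f W = 0 := fun W => (hbin W).resolve_right (hno W)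
    rw [Finset.sum_eq_zero (fun W _ => hz W)] at hsum
    norm_num at hsum
  obtain ⟨P, hP⟩ := hex
  refine ⟨P, hP, fun W hW => ?_⟩
  by_contra hne
  have hle : ∑ W' ∈ ({W, P} : Finset (Finset V)), f W' ≤ ∑ W' : Finset V, f W' :=
    Finset.sum_le_sum_of_subset_of_nonneg (Finset.subset_univ _)
      (fun i _ _ => hnn i)
  rw [Finset.sum_pair hne, hW, hP, hsum] at hle
  norm_num at hle

theorem decomposable_score_max_eq_ilp_opt
    (V : Type*) [Fintype V] [DecidableEq V] (c : V → Finset V → ℝ) :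
    sSup {s : ℝ | ∃ Pa : V → Finset V,
        (∀ v : V, ¬ Relation.TransGen (fun u w => u ∈ Pa w) v v) ∧
        s = ∑ v : V, c v (Pa v)} =
      sSup {s : ℝ | ∃ I : V → Finset V → ℝ,
        (∀ v W, I v W = 0 ∨ I v W = 1) ∧
        (∀ v : V, ∑ W : Finset V, I v W = 1) ∧
        (∀ C : Finset V, C.Nonempty →
          1 ≤ ∑ v ∈ C, ∑ W ∈ Finset.univ.filter (fun W : Finset V => W ∩ C = ∅), I v W) ∧
        s = ∑ v : V, ∑ W : Finset V, c v W * I v W} := by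
  congr 1
  ext s
  constructor
  · rintro ⟨Pa, hacyc, rfl⟩
    refine ⟨fun v W => if W = Pa v then 1 else 0, ?_, ?_, ?_, ?_⟩
    · intro v W; by_cases h : W = Pa v <;> simp [h]
    · intro v; simp
    · intro C hC
      obtain ⟨v0, hv0C, hmin⟩ := my_exists_min Pa hacyc C hC
      have hPaC : Pa v0 ∩ C = ∅ := by
        ext u
        simp only [Finset.mem_inter, Finset.notMem_empty, iff_false, not_and]
        intro h1 h2
        exact hmin u h2 h1
      have hmemW : Pa v0 ∈ Finset.univ.filter (fun W : Finset V => W ∩ C = ∅) := by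
        simp [hPaC]
      have hnn : ∀ (v : V) (W : Finset V), (0:ℝ) ≤ if W = Pa v then 1 else 0 := by
        intro v W; by_cases h : W = Pa v <;> simp [h]
      have h1 : (1:ℝ) ≤ ∑ W ∈ Finset.univ.filter (fun W : Finset V => W ∩ C = ∅),
          (if W = Pa v0 then (1:ℝ) else 0) := by
        have := Finset.single_le_sum (f := fun W : Finset V => if W = Pa v0 then (1:ℝ) else 0)
          (fun W _ => hnn v0 W) hmemW
        simpa using this
      calc (1:ℝ) ≤ ∑ W ∈ Finset.univ.filter (fun W : Finset V => W ∩ C = ∅),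
            (if W = Pa v0 then (1:ℝ) else 0) := h1
        _ ≤ ∑ v ∈ C, ∑ W ∈ Finset.univ.filter (fun W : Finset V => W ∩ C = ∅),
            (if W = Pa v then (1:ℝ) else 0) :=
          Finset.single_le_sum
            (f := fun v => ∑ W ∈ Finset.univ.filter (fun W : Finset V => W ∩ C = ∅),
              (if W = Pa v then (1:ℝ) else 0))
            (fun v _ => Finset.sum_nonneg (fun W _ => hnn v W)) hv0C
    · refine Finset.sum_congr rfl (fun v _ => ?_)
      simp [mul_ite]
  · rintro ⟨I, hbin, hsum, hclus, rfl⟩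
    choose Pa hPa1 hPauniq using fun v => my_unique_one (I v) (hbin v) (hsum v)
    refine ⟨Pa, ?_, ?_⟩
    · intro v hv
      classical
      set r := fun u w : V => u ∈ Pa w with hr
      set C : Finset V :=
        Finset.univ.filter (fun w => Relation.TransGen r v w ∧ Relation.TransGen r w v)
        with hCdef
      have hvC : v ∈ C := by simp [hCdef, hv]
      have h1 := hclus C ⟨v, hvC⟩
      have hterm : ∃ w ∈ C, ∃ W ∈ Finset.univ.filter (fun W : Finset V => W ∩ C = ∅),
          I w W ≠ 0 := by
        by_contra hno
        push_neg at hno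
        have hz : ∑ w ∈ C, ∑ W ∈ Finset.univ.filter (fun W : Finset V => W ∩ C = ∅),
            I w W = 0 :=
          Finset.sum_eq_zero (fun w hw => Finset.sum_eq_zero (fun W hW => hno w hw W hW))
        rw [hz] at h1
        norm_num at h1
      obtain ⟨w, hwC, W, hWf, hWne⟩ := hterm
      have hW1 : I w W = 1 := (hbin w W).resolve_left hWne
      have hWP : W = Pa w := hPauniq w W hW1
      have hdisj : Pa w ∩ C = ∅ := by
        rw [← hWP]
        exact (Finset.mem_filter.mp hWf).2
      have hwmem := (Finset.mem_filter.mp hwC).2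
      obtain ⟨u, hvu, huw⟩ := (Relation.TransGen.tail'_iff).mp hwmem.1
      have huv : Relation.TransGen r u w := Relation.TransGen.single huw
      have huC : u ∈ C := by
        have hvu' : Relation.TransGen r v u := by
          rcases (Relation.reflTransGen_iff_eq_or_transGen.mp hvu) with h | h
          · exact h ▸ hv
          · exact h
        have huv2 : Relation.TransGen r u v := Relation.TransGen.head huw hwmem.2
        simp [hCdef, hvu', huv2]
      exact Finset.eq_empty_iff_forall_notMem.mp hdisj u
        (Finset.mem_inter.mpr ⟨huw, huC⟩)
    · refine Finset.sum_congr rfl (fun v _ => ?_)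
      rw [Finset.sum_eq_single (Pa v)]
      · rw [hPa1 v, mul_one]
      · intro W _ hne
        have hz : I v W = 0 :=
          (hbin v W).resolve_right (fun h1 => hne (hPauniq v W h1))
        simp [hz]
      · simp
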